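/- If a metric space (X, D) admits a topological well-ordering ≺ and (X, D) is compact, then X is countable. -/

import Mathlib

/-- If a compact metric space admits a topological well-ordering, then it is countable. -/
theorem countable_of_compact_topological_well_ordering {X : Type*} [MetricSpace X]
    [CompactSpace X]
    (lt : X → X → Prop) (hwo : IsWellOrder X lt)
    (hopen : ∀ x : X, IsOpen {y : X | lt y x}) :
    Countable X := by
  have htri := fun a b => @trichotomous _ lt (by haveI := hwo; infer_instance) a b
  have htrans := fun a b c => @IsTrans.trans _ lt (by haveI := hwo; infer_instance) a b c
  -- U x = {y | ¬ lt x y} is open and contains x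
  have hUopen : ∀ x : X, IsOpen {y : X | ¬ lt x y} := by
    intro x
    by_cases h : ∃ y, lt x y
    · obtain ⟨s, hs, hmin⟩ := hwo.wf.has_min {y | lt x y} h
      have : {y : X | ¬ lt x y} = {y : X | lt y s} := by
        ext y
        simp only [Set.mem_setOf_eq]
        constructor
        · intro hy
          rcases htri y x with h1 | h1 | h1
          · exact htrans _ _ _ h1 hs
          · subst h1; exact hs
          · exact absurd h1 hy
        · intro hy hxy
          exact hmin y hxy hy
      rw [this]; exact hopen s
    · have : {y : X | ¬ lt x y} = Set.univ := by
        ext y; simp only [Set.mem_setOf_eq, Set.mem_univ, iff_true]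
        exact fun hy => h ⟨y, hy⟩
      rw [this]; exact isOpen_univ
  -- define S n
  set S : ℕ → Set X := fun n => {x : X | Metric.ball x (1 / (n + 1)) ⊆ {y | ¬ lt x y}}
    with hS
  -- every x is in some S n
  have hcover : ∀ x : X, ∃ n, x ∈ S n := by
    intro x
    have hx : x ∈ {y : X | ¬ lt x y} := fun h => (hwo.wf.asymmetric x x h) h
    obtain ⟨ε, hε, hball⟩ := Metric.isOpen_iff.mp (hUopen x) x hx
    obtain ⟨n, hn⟩ := exists_nat_one_div_lt hε
    refine ⟨n, fun y hy => hball ?_⟩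
    rw [Metric.mem_ball] at hy ⊢
    push_cast at hn
    linarith
  -- each S n is finite
  have hfin : ∀ n, (S n).Finite := by
    intro n
    have hsep : ∀ x ∈ S n, ∀ z ∈ S n, x ≠ z → (1 : ℝ) / (n + 1) ≤ dist x z := by
      intro x hx z hz hne
      by_contra hlt
      push_neg at hlt
      rcases htri x z with h1 | h1 | h1
      · exact hx (by rwa [Metric.mem_ball, dist_comm] : z ∈ Metric.ball x (1 / (n + 1))) h1
      · exact hne h1
      · exact hz (by rwa [Metric.mem_ball] : x ∈ Metric.ball z (1 / (n + 1))) h1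
    -- use total boundedness
    have htb : TotallyBounded (Set.univ : Set X) :=
      isCompact_univ.totallyBounded
    have hpos : (0 : ℝ) < 1 / (2 * (n + 1)) := by positivity
    obtain ⟨t, htfin, hcov⟩ := (Metric.totallyBounded_iff.mp htb) (1 / (2 * (n + 1))) hpos
    -- each point of S n is in a ball around some point of t; map is injective on S n
    have hex : ∀ x : X, ∃ c ∈ t, x ∈ Metric.ball c (1 / (2 * (n + 1))) := by
      intro x
      have := hcov (Set.mem_univ x)
      simpa using this
    choose f hf1 hf2 using hex
    apply Set.Finite.of_finite_image (f := f) ?_ ?_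
    · exact htfin.subset (by rintro _ ⟨x, _, rfl⟩; exact hf1 x)
    · intro x hx z hz hfeq
      by_contra hne
      have h1 := hf2 x
      have h2 := hf2 z
      rw [hfeq] at h1
      have hd : dist x z < 1 / (n + 1) := by
        calc dist x z ≤ dist x (f z) + dist (f z) z := dist_triangle _ _ _
        _ < 1 / (2 * (n + 1)) + 1 / (2 * (n + 1)) := by
            rw [Metric.mem_ball] at h1 h2
            rw [dist_comm (f z) z]
            exact add_lt_add h1 h2
        _ = 1 / (n + 1) := by
            have hn1 : (n : ℝ) + 1 ≠ 0 := by positivity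
            field_simp
            ring
      exact absurd (hsep x hx z hz hne) (not_le.mpr hd)
  -- conclude
  have : (Set.univ : Set X).Countable := by
    have : (Set.univ : Set X) ⊆ ⋃ n, S n := by
      intro x _
      obtain ⟨n, hn⟩ := hcover x
      exact Set.mem_iUnion.mpr ⟨n, hn⟩
    exact (Set.countable_iUnion fun n => (hfin n).countable).mono this
  exact Set.countable_univ_iff.mp this
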